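/- Let R be a Noetherian local ring and let L be a proper ideal of R generated by a regular sequence of length c such that R/L has finite length. Then for every positive integer m, the length of R/L^m equals λ(R/L)·C(c+m-1, c), where λ denotes length and C(c+m-1, c) is the binomial coefficient. -/

import Mathlib

open Ideal Filter

universe u

open RingTheory.Sequence Pointwise
/-- The length of a module, as the supremum of lengths of strict chains of submodules. -/
noncomputable def moduleLength (S : Type*) [CommRing S] (M : Type*) [AddCommGroup M]
    [Module S M] : ℕ∞ :=
  ⨆ p : LTSeries (Submodule S M), (p.length : ℕ∞)

noncomputable def pLen (α : Type*) [Preorder α] : ℕ∞ :=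
  ⨆ p : LTSeries α, (p.length : ℕ∞)

lemma moduleLength_eq_pLen (S : Type*) [CommRing S] (M : Type*) [AddCommGroup M] [Module S M] :
    moduleLength S M = pLen (Submodule S M) := rfl

lemma pLen_le_of_strictMono {α β : Type*} [Preorder α] [Preorder β] (f : α → β)
    (hf : StrictMono f) : pLen α ≤ pLen β :=
  iSup_le fun p => le_iSup_of_le (p.map f hf) (by simp [LTSeries.map])

lemma pLen_eq_of_orderIso {α β : Type*} [Preorder α] [Preorder β] (f : α ≃o β) :
    pLen α = pLen β :=
  le_antisymm (pLen_le_of_strictMono f f.strictMono)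
    (pLen_le_of_strictMono f.symm f.symm.strictMono)

lemma exists_decomp_prod {α β : Type*} [PartialOrder α] [PartialOrder β] :
    ∀ (n : ℕ) (p : LTSeries (α × β)), p.length = n →
      ∃ (q : LTSeries α) (r : LTSeries β), q.last = p.last.1 ∧ r.last = p.last.2 ∧
        p.length ≤ q.length + r.length := by
  intro n
  induction n with
  | zero =>
    intro p hp
    exact ⟨RelSeries.singleton _ p.last.1, RelSeries.singleton _ p.last.2, rfl, rfl, by omega⟩
  | succ n ih =>
    intro p hp
    obtain ⟨q, r, hq, hr, hlen⟩ := ih p.eraseLast (by simp [RelSeries.eraseLast, hp])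
    have hne : p.length ≠ 0 := by omega
    have hstep := p.eraseLast_last_rel_last hne
    have h1 : p.eraseLast.last.1 ≤ p.last.1 := le_of_lt (show p.eraseLast.last < p.last from hstep) |>.1
    have h2 : p.eraseLast.last.2 ≤ p.last.2 := le_of_lt (show p.eraseLast.last < p.last from hstep) |>.2
    have helen : p.eraseLast.length = n := by simp [RelSeries.eraseLast, hp]
    rcases h1.lt_or_eq with h1' | h1'
    · rcases h2.lt_or_eq with h2' | h2'
      · refine ⟨q.snoc p.last.1 (hq ▸ h1'), r.snoc p.last.2 (hr ▸ h2'), by simp, by simp, ?_⟩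
        simp [RelSeries.snoc_length]; omega
      · refine ⟨q.snoc p.last.1 (hq ▸ h1'), r, by simp, by rw [hr, h2'], ?_⟩
        simp [RelSeries.snoc_length]; omega
    · rcases h2.lt_or_eq with h2' | h2'
      · refine ⟨q, r.snoc p.last.2 (hr ▸ h2'), by rw [hq, h1'], by simp, ?_⟩
        simp [RelSeries.snoc_length]; omega
      · exact absurd (Prod.ext h1' h2') hstep.ne

lemma pLen_prod_le {α β : Type*} [PartialOrder α] [PartialOrder β] :
    pLen (α × β) ≤ pLen α + pLen β := by
  refine iSup_le fun p => ?_
  obtain ⟨q, r, -, -, hlen⟩ := exists_decomp_prod p.length p rfl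
  have h1 : (q.length : ℕ∞) ≤ pLen α := le_iSup (fun p : LTSeries α => (p.length : ℕ∞)) q
  have h2 : (r.length : ℕ∞) ≤ pLen β := le_iSup (fun p : LTSeries β => (p.length : ℕ∞)) r
  calc (p.length : ℕ∞) ≤ (q.length : ℕ∞) + (r.length : ℕ∞) := by exact_mod_cast hlen
    _ ≤ pLen α + pLen β := add_le_add h1 h2

instance LTSeries.instNonempty {α : Type*} [Preorder α] [Nonempty α] :
    Nonempty (LTSeries α) := ⟨RelSeries.singleton _ (Classical.arbitrary α)⟩

lemma pLen_additive {R : Type*} {M : Type*} [CommRing R] [AddCommGroup M] [Module R M]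
    (N : Submodule R M) :
    pLen (Submodule R M) = pLen (Submodule R N) + pLen (Submodule R (M ⧸ N)) := by
  apply le_antisymm
  · have hmap : StrictMono (fun x : Submodule R M =>
        ((⟨x ⊓ N, inf_le_right⟩ : {p // p ≤ N}), (⟨x ⊔ N, le_sup_right⟩ : {p // N ≤ p}))) := by
      intro x y hxy
      have := strictMono_inf_prod_sup (z := N) hxy
      rw [Prod.lt_iff] at this ⊢
      rcases this with ⟨h1, h2⟩ | ⟨h1, h2⟩
      · exact Or.inl ⟨by exact_mod_cast h1, by exact_mod_cast h2⟩
      · exact Or.inr ⟨by exact_mod_cast h1, by exact_mod_cast h2⟩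
    calc pLen (Submodule R M) ≤ pLen ({p // p ≤ N} × {p // N ≤ p}) :=
          pLen_le_of_strictMono _ hmap
      _ ≤ pLen {p // p ≤ N} + pLen {p // N ≤ p} := pLen_prod_le
      _ = pLen (Submodule R N) + pLen (Submodule R (M ⧸ N)) := by
          rw [pLen_eq_of_orderIso (Submodule.MapSubtype.orderIso N).symm,
             show pLen {p // N ≤ p} = pLen (Set.Ici N) from rfl,
             pLen_eq_of_orderIso (Submodule.comapMkQRelIso N).symm]
  · refine ENat.iSup_add_iSup_le fun q r => ?_
    have hsub : StrictMono (fun P : Submodule R N => Submodule.map N.subtype P) := by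
      intro a b hab
      have := (Submodule.MapSubtype.orderIso N).strictMono hab
      exact_mod_cast this
    have hcom : StrictMono (fun P : Submodule R (M ⧸ N) => Submodule.comap N.mkQ P) := by
      intro a b hab
      have : (Submodule.comapMkQRelIso N) a < (Submodule.comapMkQRelIso N) b :=
        (Submodule.comapMkQRelIso N).strictMono hab
      exact_mod_cast this
    set q' := q.map _ hsub with hq'
    set r' := r.map _ hcom with hr'
    have hle : q'.last ≤ r'.head := by
      refine le_trans (b := N) ?_ ?_
      · rw [hq', LTSeries.last_map]
        exact Submodule.map_subtype_le N _
      · rw [hr', LTSeries.head_map]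
        exact (Submodule.comapMkQRelIso N (r.head)).2
    rcases hle.lt_or_eq with hlt | heq
    · have hfin := le_iSup (fun p : LTSeries (Submodule R M) => (p.length : ℕ∞)) (q'.append r' hlt)
      refine le_trans ?_ hfin
      have hl : (q'.append r' hlt).length = q.length + r.length + 1 := by
        simp [RelSeries.append, hq', hr', LTSeries.map]
      rw [hl]
      push_cast
      exact le_self_add.trans (le_refl _)
    · have hfin := le_iSup (fun p : LTSeries (Submodule R M) => (p.length : ℕ∞)) (q'.smash r' heq)
      refine le_trans ?_ hfin
      have hl : (q'.smash r' heq).length = q.length + r.length := by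
        simp [RelSeries.smash, hq', hr', LTSeries.map]
      rw [hl]
      push_cast
      exact le_refl _

lemma moduleLength_additive {S : Type u_master2} [CommRing S] {M' : Type u_master3}
    [AddCommGroup M'] [Module S M'] (N : Submodule S M') :
    moduleLength S M' = moduleLength S N + moduleLength S (M' ⧸ N) := by
  exact pLen_additive (R := S) (M := M') N

lemma moduleLength_congr {S : Type*} [CommRing S] {M₁ M₂ : Type*} [AddCommGroup M₁] [Module S M₁]
    [AddCommGroup M₂] [Module S M₂] (e : M₁ ≃ₗ[S] M₂) :
    moduleLength S M₁ = moduleLength S M₂ := by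
  exact pLen_eq_of_orderIso (α := Submodule S M₁) (β := Submodule S M₂)
    (Submodule.orderIsoMapComap e)

section QuotQuot
variable {R : Type*} [CommRing R]

/-- Order iso between ideals of `R⧸J` containing the image of `T` and ideals of `R`
containing `T`, given `J ≤ T`. -/
def idealCorresp (J T : Ideal R) (hJT : J ≤ T) :
    {p : Ideal (R ⧸ J) // T.map (Ideal.Quotient.mk J) ≤ p} ≃o {p : Ideal R // T ≤ p} where
  toFun p := ⟨Ideal.comap (Ideal.Quotient.mk J) p.1,
    le_trans (Ideal.le_comap_map) (Ideal.comap_mono p.2)⟩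
  invFun p := ⟨Ideal.map (Ideal.Quotient.mk J) p.1, Ideal.map_mono p.2⟩
  left_inv p := by
    ext1
    exact Ideal.map_comap_of_surjective _ Ideal.Quotient.mk_surjective _
  right_inv p := by
    ext1
    show Ideal.comap (Ideal.Quotient.mk J) (Ideal.map (Ideal.Quotient.mk J) p.1) = p.1
    rw [Ideal.comap_map_of_surjective _ Ideal.Quotient.mk_surjective]
    have : Ideal.comap (Ideal.Quotient.mk J) ⊥ = J := by
      rw [← RingHom.ker_eq_comap_bot, Ideal.mk_ker]
    rw [this]
    exact sup_eq_left.mpr (le_trans hJT p.2)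
  map_rel_iff' {p q} := by
    constructor
    · intro h
      have h2 : Ideal.map (Ideal.Quotient.mk J) (Ideal.comap (Ideal.Quotient.mk J) p.1) ≤
          Ideal.map (Ideal.Quotient.mk J) (Ideal.comap (Ideal.Quotient.mk J) q.1) :=
        Ideal.map_mono h
      rwa [Ideal.map_comap_of_surjective _ Ideal.Quotient.mk_surjective,
        Ideal.map_comap_of_surjective _ Ideal.Quotient.mk_surjective] at h2
    · intro h
      show Ideal.comap (Ideal.Quotient.mk J) p.1 ≤ Ideal.comap (Ideal.Quotient.mk J) q.1
      exact Ideal.comap_mono h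

lemma moduleLength_quot_quot (J T : Ideal R) (hJT : J ≤ T) :
    moduleLength (R ⧸ J) ((R ⧸ J) ⧸ (T.map (Ideal.Quotient.mk J))) = moduleLength R (R ⧸ T) := by
  have e1 : pLen (Submodule (R ⧸ J) ((R ⧸ J) ⧸ (T.map (Ideal.Quotient.mk J)))) =
      pLen {p : Ideal (R ⧸ J) // T.map (Ideal.Quotient.mk J) ≤ p} :=
    pLen_eq_of_orderIso (Submodule.comapMkQRelIso _)
  have e2 : pLen (Submodule R (R ⧸ T)) = pLen {p : Ideal R // T ≤ p} :=
    pLen_eq_of_orderIso (Submodule.comapMkQRelIso _)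
  show pLen _ = pLen _
  rw [e1, e2]
  exact pLen_eq_of_orderIso (idealCorresp J T hJT)

end QuotQuot

section RegHelpers
variable {R : Type u} [CommRing R]

lemma ofList_perm {l₁ l₂ : List R} (h : l₁.Perm l₂) : Ideal.ofList l₁ = Ideal.ofList l₂ := by
  unfold Ideal.ofList
  congr 1
  ext x
  exact h.mem_iff

lemma isRegular_prefix {M : Type*} [AddCommGroup M] [Module R M] {l₁ l₂ : List R}
    (h : IsRegular M (l₁ ++ l₂)) : IsRegular M l₁ := by
  obtain ⟨hw, hne⟩ := h
  constructor
  · constructor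
    intro i hi
    have hi' : i < (l₁ ++ l₂).length := by simp; omega
    have := hw.regular_mod_prev i hi'
    rwa [List.getElem_append_left hi, List.take_append_of_le_length (le_of_lt hi)] at this
  · intro htop
    apply hne
    refine le_antisymm (htop.le.trans (Submodule.smul_mono_left ?_)) le_top
    rw [Ideal.ofList_append]
    exact le_sup_left

lemma ofList_ne_top {rs : List R} (h : IsRegular R rs) : Ideal.ofList rs ≠ ⊤ := by
  intro htop
  apply h.top_ne_smul
  rw [htop, Submodule.top_smul]

/-- Pass a regular sequence to the quotient by the span of its head. -/
lemma regular_quot {x : R} {zs : List R} (h : IsRegular R (x :: zs)) :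
    IsRegular (R ⧸ Ideal.span {x}) (zs.map (Ideal.Quotient.mk (Ideal.span {x}))) := by
  have h2 := (RingTheory.Sequence.isRegular_cons_iff' R x zs).mp h |>.2
  -- h2 : IsRegular (QuotSMulTop x R) (zs.map (Ideal.Quotient.mk (Ideal.span {x})))
  have heq : (x • (⊤ : Submodule R R)) = (Ideal.span {x} : Ideal R) := by
    ext m
    constructor
    · rintro ⟨y, -, rfl⟩
      exact Ideal.mem_span_singleton.mpr ⟨y, rfl⟩
    · intro hm
      obtain ⟨y, rfl⟩ := Ideal.mem_span_singleton.mp hm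
      exact ⟨y, trivial, rfl⟩
  let e := Submodule.quotEquivOfEq _ _ heq
  refine (AddEquiv.isRegular_congr (e := e.toAddEquiv) ?_).mp h2
  refine List.forall₂_map_left_iff.mpr (List.forall₂_map_right_iff.mpr
    (List.forall₂_same.mpr fun a _ => ?_))
  intro y
  obtain ⟨y₀, rfl⟩ := Submodule.Quotient.mk_surjective _ y
  rfl

end RegHelpers

section Key
variable {R : Type u} [CommRing R]

lemma pow_sup_le (J X : Ideal R) : ∀ m : ℕ, (J ⊔ X) ^ (m + 1) ≤ J ^ (m + 1) ⊔ X * (J ⊔ X) ^ m := by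
  intro m
  induction m with
  | zero => rw [pow_one, pow_one, pow_zero, mul_one]
  | succ m ih =>
    calc (J ⊔ X) ^ (m + 2) = (J ⊔ X) ^ (m + 1) * (J ⊔ X) := by rw [pow_succ]
      _ ≤ (J ^ (m + 1) ⊔ X * (J ⊔ X) ^ m) * (J ⊔ X) := Ideal.mul_mono_left ih
      _ = J ^ (m + 1) * (J ⊔ X) ⊔ (X * (J ⊔ X) ^ m) * (J ⊔ X) := Ideal.sup_mul _ _ _
      _ ≤ J ^ (m + 2) ⊔ X * (J ⊔ X) ^ (m + 1) := ?_
    apply sup_le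
    · rw [Ideal.mul_sup]
      apply sup_le
      · rw [← pow_succ]; exact le_sup_left
      · refine le_sup_of_le_right ?_
        rw [mul_comm]
        exact Ideal.mul_mono_right (Ideal.pow_right_mono le_sup_left _)
    · rw [mul_assoc, ← pow_succ]
      exact le_sup_right

end Key

/-- The statement of the key lemma, as a function of the sequence length. -/
def KeyStmt (c : ℕ) : Prop :=
  ∀ (m : ℕ) (R : Type u) [CommRing R] [IsNoetherianRing R] [IsLocalRing R]
    (ys : List R) (x : R), ys.length = c → IsRegular R (ys ++ [x]) →
    ∀ r : R, x * r ∈ (Ideal.ofList ys) ^ m → r ∈ (Ideal.ofList ys) ^ m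

/-- `keyA` given the key statement at level `c` : for a regular sequence `xs` of length `c+1`
and `x ∈ xs`, `x * r ∈ K^(m+1)` implies `r ∈ K^m`. -/
lemma keyA_of {c : ℕ} (hB : KeyStmt.{u} c) (m : ℕ) (R : Type u) [CommRing R]
    [IsNoetherianRing R] [IsLocalRing R] (xs : List R) (x : R) (hlen : xs.length = c + 1)
    (hreg : IsRegular R xs) (hx : x ∈ xs) (r : R)
    (hr : x * r ∈ (Ideal.ofList xs) ^ (m + 1)) : r ∈ (Ideal.ofList xs) ^ m := by
  classical
  set ys := xs.erase x with hys
  have hperm : xs.Perm (ys ++ [x]) :=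
    ((List.perm_cons_erase hx).trans (List.perm_append_singleton x ys).symm)
  haveI : IsNoetherian R R := isNoetherianRing_iff.mp ‹_›
  have hreg' : IsRegular R (ys ++ [x]) := IsLocalRing.isRegular_of_perm hreg hperm
  have hKeq : Ideal.ofList xs = Ideal.ofList ys ⊔ Ideal.span {x} := by
    rw [ofList_perm hperm, Ideal.ofList_append, Ideal.ofList_singleton]
  set K := Ideal.ofList xs with hK
  set J := Ideal.ofList ys with hJ
  have hlen' : ys.length = c := by
    rw [hys, List.length_erase_of_mem hx, hlen]
    omega
  have hdec : K ^ (m + 1) ≤ J ^ (m + 1) ⊔ Ideal.span {x} * K ^ m := by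
    calc K ^ (m+1) = (J ⊔ Ideal.span {x}) ^ (m+1) := by rw [← hKeq]
      _ ≤ J ^ (m+1) ⊔ Ideal.span {x} * (J ⊔ Ideal.span {x}) ^ m := pow_sup_le _ _ m
      _ = J ^ (m+1) ⊔ Ideal.span {x} * K ^ m := by rw [← hKeq]
  obtain ⟨u, hu, w, hw, huw⟩ := Submodule.mem_sup.mp (hdec hr)
  obtain ⟨v, hv, rfl⟩ := Ideal.mem_span_singleton_mul.mp hw
  have hxr : x * (r - v) ∈ J ^ (m + 1) := by
    have : x * (r - v) = u := by ring_nf; rw [← huw]; ring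
    rwa [this]
  have hrv : r - v ∈ J ^ (m + 1) := hB (m + 1) R ys x hlen' hreg' _ hxr
  have hJK : J ≤ K := hKeq ▸ le_sup_left
  have h1 : r - v ∈ K ^ m :=
    (Ideal.pow_le_pow_right (Nat.le_succ m)) (Ideal.pow_right_mono hJK (m+1) hrv)
  simpa using add_mem h1 hv

theorem keyB : ∀ c : ℕ, KeyStmt.{u} c := by
  intro c
  induction c with
  | zero =>
    intro m R _ _ _ ys x hlen hreg r hr
    obtain rfl : ys = [] := List.length_eq_zero_iff.mp hlen
    cases m with
    | zero => simpa using Submodule.mem_top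
    | succ m =>
      have hx : IsSMulRegular R x := by
        have h' : IsRegular R [x] := by simpa using hreg
        exact ((isRegular_cons_iff R x []).mp h').1
      have hbot : (Ideal.ofList ([] : List R)) ^ (m + 1) = ⊥ := by
        rw [Ideal.ofList_nil, ← Ideal.zero_eq_bot, zero_pow (Nat.succ_ne_zero m)]
      rw [hbot] at hr ⊢
      have h0 : x * r = 0 := (Ideal.mem_bot).mp hr
      have : r = 0 := by
        apply hx
        show x • r = x • (0 : R)
        simp [smul_eq_mul, h0]
      simp [Ideal.mem_bot, this]
  | succ c ihc =>
    intro m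
    induction m with
    | zero =>
      intro R _ _ _ ys x hlen hreg r _
      simp [pow_zero, Ideal.one_eq_top]
    | succ m ihm =>
      intro R _ _ _ ys x hlen hreg r hr
      obtain ⟨x₁, zs, rfl⟩ : ∃ a l, ys = a :: l := by
        cases ys with
        | nil => simp at hlen
        | cons a l => exact ⟨a, l, rfl⟩
      have hzslen : zs.length = c := by simpa using hlen
      set π := Ideal.Quotient.mk (Ideal.span {x₁}) with hπ
      set K := Ideal.ofList (x₁ :: zs) with hK
      have hregfull : IsRegular R (x₁ :: (zs ++ [x])) := by simpa using hreg
      have hregpre : IsRegular R (x₁ :: zs) := isRegular_prefix hreg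
      -- instances on the quotient ring
      have hspanne : Ideal.span {x₁} ≠ ⊤ := by
        intro htop
        apply ofList_ne_top hregfull
        rw [Ideal.ofList_cons, htop]
        exact top_sup_eq _
      haveI : Nontrivial (R ⧸ Ideal.span {x₁}) :=
        Ideal.Quotient.nontrivial_iff.mpr hspanne
      haveI : IsLocalRing (R ⧸ Ideal.span {x₁}) :=
        IsLocalRing.of_surjective' π Ideal.Quotient.mk_surjective
      -- step 1 : pass to the quotient
      have hmapK : Ideal.map π K = Ideal.ofList (zs.map π) := by
        rw [hK, Ideal.map_ofList, List.map_cons, Ideal.ofList_cons]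
        have : π x₁ = 0 := Ideal.Quotient.eq_zero_iff_mem.mpr (Ideal.subset_span rfl)
        rw [this, Ideal.span_singleton_eq_bot.mpr rfl, bot_sup_eq]
      have hqreg : IsRegular (R ⧸ Ideal.span {x₁}) (zs.map π ++ [π x]) := by
        simpa using regular_quot hregfull
      have h1 : π x * π r ∈ (Ideal.ofList (zs.map π)) ^ (m + 1) := by
        rw [← _root_.map_mul, ← hmapK, ← Ideal.map_pow]
        exact Ideal.mem_map_of_mem π hr
      have h2 : π r ∈ (Ideal.ofList (zs.map π)) ^ (m + 1) :=
        ihc (m + 1) (R ⧸ Ideal.span {x₁}) (zs.map π) (π x)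
          (by simpa using hzslen) hqreg _ h1
      have h3 : r ∈ K ^ (m + 1) ⊔ Ideal.span {x₁} := by
        have hmem : π r ∈ Ideal.map π (K ^ (m + 1)) := by
          rw [Ideal.map_pow, hmapK]; exact h2
        have := Ideal.comap_map_of_surjective π Ideal.Quotient.mk_surjective (K ^ (m + 1))
        have hker : Ideal.comap π ⊥ = Ideal.span {x₁} := by
          rw [← RingHom.ker_eq_comap_bot, Ideal.mk_ker]
        rw [hker] at this
        rw [← this]
        exact Ideal.mem_comap.mpr hmem
      obtain ⟨a, ha, w, hw, huw⟩ := Submodule.mem_sup.mp h3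
      obtain ⟨s, rfl⟩ := Ideal.mem_span_singleton.mp hw
      have h4 : x₁ * (x * s) ∈ K ^ (m + 1) := by
        have heq : x₁ * (x * s) = x * r - x * a := by rw [← huw]; ring
        rw [heq]
        exact sub_mem hr (Ideal.mul_mem_left _ x ha)
      have h5 : x * s ∈ K ^ m :=
        keyA_of ihc m R (x₁ :: zs) x₁ hlen hregpre List.mem_cons_self _ h4
      have h6 : s ∈ K ^ m := ihm R (x₁ :: zs) x hlen hreg s h5
      have h7 : x₁ * s ∈ K ^ (m + 1) := by
        rw [pow_succ']
        exact Ideal.mul_mem_mul (hK ▸ (Ideal.ofList_cons x₁ zs ▸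
          le_sup_left (a := Ideal.span {x₁}) (Ideal.subset_span rfl))) h6
      rw [← huw]
      exact add_mem ha h7


lemma keyA {c m : ℕ} {R : Type u} [CommRing R] [IsNoetherianRing R] [IsLocalRing R]
    (xs : List R) (x : R) (hlen : xs.length = c + 1) (hreg : RingTheory.Sequence.IsRegular R xs)
    (hx : x ∈ xs) (r : R)
    (hr : x * r ∈ (Ideal.ofList xs) ^ (m + 1)) : r ∈ (Ideal.ofList xs) ^ m :=
  keyA_of (keyB c) m R xs x hlen hreg hx r hr

theorem mainLen : ∀ (c : ℕ) (R : Type u) [CommRing R] [IsNoetherianRing R] [IsLocalRing R]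
    (rs : List R), rs.length = c → IsRegular R rs → ∀ m : ℕ, 0 < m →
    moduleLength R (R ⧸ (Ideal.ofList rs) ^ m)
      = moduleLength R (R ⧸ Ideal.ofList rs) * ((c + m - 1).choose c : ℕ∞) := by
  intro c
  induction c with
  | zero =>
    intro R _ _ _ rs hlen hreg m hm
    obtain rfl : rs = [] := List.length_eq_zero_iff.mp hlen
    have hbot : (Ideal.ofList ([] : List R)) ^ m = Ideal.ofList ([] : List R) := by
      rw [Ideal.ofList_nil, ← Ideal.zero_eq_bot, zero_pow hm.ne']
    rw [hbot, Nat.choose_zero_right, Nat.cast_one, mul_one]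
  | succ c ihc =>
    intro R _ _ _ rs hlen hreg m hm
    obtain ⟨x₁, zs, rfl⟩ : ∃ a l, rs = a :: l := by
      cases rs with
      | nil => simp at hlen
      | cons a l => exact ⟨a, l, rfl⟩
    have hzslen : zs.length = c := by simpa using hlen
    set π := Ideal.Quotient.mk (Ideal.span {x₁}) with hπ
    set K := Ideal.ofList (x₁ :: zs) with hK
    have hx₁K : Ideal.span {x₁} ≤ K := by
      rw [hK, Ideal.ofList_cons]; exact le_sup_left
    have hspanne : Ideal.span {x₁} ≠ ⊤ := by
      intro htop
      apply ofList_ne_top hreg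
      rw [Ideal.ofList_cons, htop]
      exact top_sup_eq _
    haveI : Nontrivial (R ⧸ Ideal.span {x₁}) := Ideal.Quotient.nontrivial_iff.mpr hspanne
    haveI : IsLocalRing (R ⧸ Ideal.span {x₁}) :=
      IsLocalRing.of_surjective' π Ideal.Quotient.mk_surjective
    have hmapK : Ideal.map π K = Ideal.ofList (zs.map π) := by
      rw [hK, Ideal.map_ofList, List.map_cons, Ideal.ofList_cons]
      have : π x₁ = 0 := Ideal.Quotient.eq_zero_iff_mem.mpr (Ideal.subset_span rfl)
      rw [this, Ideal.span_singleton_eq_bot.mpr rfl, bot_sup_eq]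
    have hqreg : IsRegular (R ⧸ Ideal.span {x₁}) (zs.map π) := regular_quot hreg
    have hbarlen : moduleLength (R ⧸ Ideal.span {x₁})
        ((R ⧸ Ideal.span {x₁}) ⧸ (Ideal.ofList (zs.map π))) = moduleLength R (R ⧸ K) := by
      rw [← hmapK]
      exact moduleLength_quot_quot _ K hx₁K
    -- induction on m ≥ 1
    induction m, hm using Nat.le_induction with
    | base =>
      rw [pow_one]
      have h1 : (c + 1 + 1 - 1).choose (c + 1) = 1 := by
        have : c + 1 + 1 - 1 = c + 1 := by omega
        rw [this, Nat.choose_self]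
      rw [h1, Nat.cast_one, mul_one]
    | succ m hm ihm =>
      set S : Ideal R := K ^ (m + 1) with hS
      set T : Ideal R := Ideal.span {x₁} ⊔ S with hT
      have hST : S ≤ T := le_sup_right
      have hJT : Ideal.span {x₁} ≤ T := le_sup_left
      set N : Submodule R (R ⧸ S) := Submodule.map (Submodule.mkQ S) T with hN
      -- additivity
      have hadd : moduleLength R (R ⧸ S)
          = moduleLength R N + moduleLength R ((R ⧸ S) ⧸ N) := moduleLength_additive N
      -- quotient piece
      have equot : ((R ⧸ S) ⧸ N) ≃ₗ[R] R ⧸ T := Submodule.quotientQuotientEquivQuotient S T hST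
      have hmapT : Ideal.map π T = (Ideal.ofList (zs.map π)) ^ (m + 1) := by
        have hx₁0 : π x₁ = 0 := Ideal.Quotient.eq_zero_iff_mem.mpr (Ideal.subset_span rfl)
        have hmb : Ideal.map π (Ideal.span {x₁}) = ⊥ := by
          rw [Ideal.map_span, Set.image_singleton, hx₁0]
          exact Ideal.span_singleton_eq_bot.mpr rfl
        rw [hT, Ideal.map_sup, hmb, bot_sup_eq, hS, Ideal.map_pow, hmapK]
      have hquotlen : moduleLength R ((R ⧸ S) ⧸ N)
          = moduleLength R (R ⧸ K) * ((c + m + 1 - 1).choose c : ℕ∞) := by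
        rw [moduleLength_congr equot, ← moduleLength_quot_quot (Ideal.span {x₁}) T hJT, hmapT]
        rw [ihc (R ⧸ Ideal.span {x₁}) (zs.map π) (by simpa using hzslen) hqreg (m+1) (by omega)]
        rw [hbarlen]
        have h3 : c + (m + 1) - 1 = c + m + 1 - 1 := by omega
        rw [h3]
      -- submodule piece : N ≃ R ⧸ K^m
      have hsublen : moduleLength R N = moduleLength R (R ⧸ K ^ m) := by
        set f : R →ₗ[R] (R ⧸ S) := (Submodule.mkQ S).comp ((LinearMap.mul R R) x₁) with hf
        have hker : LinearMap.ker f = (K ^ m : Ideal R) := by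
          ext r
          simp only [hf, LinearMap.mem_ker, LinearMap.coe_comp, Function.comp_apply,
            LinearMap.mul_apply_apply, Submodule.mkQ_apply, Submodule.Quotient.mk_eq_zero]
          constructor
          · intro h
            exact keyA (x₁ :: zs) x₁ hlen hreg List.mem_cons_self r h
          · intro h
            rw [hS, pow_succ']
            exact Ideal.mul_mem_mul (hx₁K (Ideal.subset_span rfl)) h
        have hrange : LinearMap.range f = N := by
          rw [hf, LinearMap.range_comp]
          have h1 : LinearMap.range ((LinearMap.mul R R) x₁) = (Ideal.span {x₁} : Ideal R) := by
            ext y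
            simp only [LinearMap.mem_range, LinearMap.mul_apply_apply, Ideal.mem_span_singleton]
            exact ⟨fun ⟨r, hr⟩ => ⟨r, hr.symm⟩, fun ⟨r, hr⟩ => ⟨r, hr.symm⟩⟩
          rw [h1, hN, hT, Submodule.map_sup]
          have h2 : Submodule.map (Submodule.mkQ S) (S : Submodule R R) = ⊥ := by
            apply le_bot_iff.mp
            intro y hy
            obtain ⟨s, hs, rfl⟩ := Submodule.mem_map.mp hy
            show Submodule.mkQ S s ∈ ⊥
            simp only [Submodule.mkQ_apply, Submodule.mem_bot, Submodule.Quotient.mk_eq_zero]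
            exact hs
          rw [h2, sup_bot_eq]
        calc moduleLength R N = moduleLength R (LinearMap.range f) := by rw [hrange]
          _ = moduleLength R (R ⧸ LinearMap.ker f) := (moduleLength_congr f.quotKerEquivRange).symm
          _ = moduleLength R (R ⧸ K ^ m) := by rw [hker]
      -- combine
      have harith : ((c + 1 + (m + 1) - 1).choose (c + 1) : ℕ∞)
          = ((c + 1 + m - 1).choose (c + 1) : ℕ∞) + ((c + m + 1 - 1).choose c : ℕ∞) := by
        have e1 : c + 1 + (m + 1) - 1 = (c + m) + 1 := by omega
        have e2 : c + 1 + m - 1 = c + m := by omega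
        have e3 : c + m + 1 - 1 = c + m := by omega
        rw [e1, e2, e3, Nat.choose_succ_succ, Nat.cast_add, add_comm]
      rw [hadd, hquotlen, hsublen, ihm, harith, mul_add]


theorem stmt2 {R : Type u} [CommRing R] [IsNoetherianRing R] [IsLocalRing R]
    (L : Ideal R) (hL : L ≠ ⊤) (c : ℕ) (rs : List R) (hlen : rs.length = c)
    (hreg : RingTheory.Sequence.IsRegular R rs) (hspan : Ideal.ofList rs = L)
    (hfin : moduleLength R (R ⧸ L) ≠ ⊤)
    (m : ℕ) (hm : 0 < m) :
    moduleLength R (R ⧸ L ^ m)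
      = moduleLength R (R ⧸ L) * ((c + m - 1).choose c : ℕ∞) := by
  subst hspan
  subst hlen
  exact mainLen rs.length R rs rfl hreg m hm
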